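/- Let α > 0, r ≥ 1, and define χ_r(x) = x^r ∫_0^1 Ψ_r(1−z)(1 + z x)^{α−1} dz for x > 0, where Ψ_r(z) = (r−1)z(1−z)^r + z^{r+1} + r z^2(1−z)^{r−1}. Then χ_r is differentiable on (0,∞) with χ_r'(x) = x^{r−1} ∫_0^1 Ψ_r(1−z)(r + (r+α−1)zx)(1+zx)^{α−2} dz > 0; hence χ_r is strictly increasing, thus injective, on (0,∞). -/

import Mathlib

open Real MeasureTheory intervalIntegral Set

lemma aux_rpow_le {t c p : ℝ} (h1 : 1 ≤ t) (h2 : t ≤ c) : t ^ p ≤ c ^ |p| :=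
  (Real.rpow_le_rpow_of_exponent_le h1 (le_abs_self p)).trans
    (Real.rpow_le_rpow (by linarith) h2 (abs_nonneg p))

lemma aux_intInt_of_bdd {f : ℝ → ℝ} {C : ℝ} (hm : Measurable f)
    (hb : ∀ z ∈ Ioc (0:ℝ) 1, |f z| ≤ C) : IntervalIntegrable f volume 0 1 := by
  rw [intervalIntegrable_iff_integrableOn_Ioc_of_le zero_le_one]
  apply Integrable.mono' (integrable_const C) hm.aestronglyMeasurable
  filter_upwards [ae_restrict_mem measurableSet_Ioc] with z hz
  simpa using hb z hz

open Real MeasureTheory intervalIntegral Set in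
theorem stmt_17 (α r : ℝ) (hα : 0 < α) (hr : 1 ≤ r) (Ψ χ : ℝ → ℝ)
    (hΨ : ∀ z : ℝ, Ψ z = (r - 1) * z * (1 - z) ^ r + z ^ (r + 1) + r * z ^ 2 * (1 - z) ^ (r - 1))
    (hχ : ∀ x : ℝ, χ x = x ^ r * ∫ z in (0:ℝ)..1, Ψ (1 - z) * (1 + z * x) ^ (α - 1)) :
    (∀ x : ℝ, 0 < x →
      HasDerivAt χ
        (x ^ (r - 1) * ∫ z in (0:ℝ)..1,
          Ψ (1 - z) * (r + (r + α - 1) * z * x) * (1 + z * x) ^ (α - 2)) x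
      ∧ 0 < x ^ (r - 1) * ∫ z in (0:ℝ)..1,
          Ψ (1 - z) * (r + (r + α - 1) * z * x) * (1 + z * x) ^ (α - 2))
    ∧ StrictMonoOn χ (Ioi 0) ∧ Set.InjOn χ (Ioi 0) := by
  -- basic facts about Ψ
  have hΨm : Measurable fun z : ℝ => Ψ (1 - z) := by
    simp only [hΨ]
    fun_prop
  have hΨ0 : ∀ w ∈ Icc (0:ℝ) 1, 0 ≤ Ψ w := by
    intro w hw
    rw [hΨ]
    have h1 : (0:ℝ) ≤ w := hw.1
    have h2 : (0:ℝ) ≤ 1 - w := by linarith [hw.2]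
    have := Real.rpow_nonneg h2 r
    have := Real.rpow_nonneg h1 (r + 1)
    have := Real.rpow_nonneg h2 (r - 1)
    have hw2 : (0:ℝ) ≤ w ^ (2:ℕ) := sq_nonneg w
    have hr0 : (0:ℝ) ≤ r - 1 := by linarith
    positivity
  have hΨub : ∀ w ∈ Icc (0:ℝ) 1, Ψ w ≤ 2 * r := by
    intro w hw
    rw [hΨ]
    have h1 : (0:ℝ) ≤ w := hw.1
    have h1' : w ≤ 1 := hw.2
    have h2 : (0:ℝ) ≤ 1 - w := by linarith
    have h2' : 1 - w ≤ 1 := by linarith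
    have b1 : (1 - w) ^ r ≤ 1 := Real.rpow_le_one h2 h2' (by linarith)
    have b2 : w ^ (r + 1) ≤ 1 := Real.rpow_le_one h1 h1' (by linarith)
    have b3 : (1 - w) ^ (r - 1) ≤ 1 := Real.rpow_le_one h2 h2' (by linarith)
    have hb1 : (r - 1) * w * (1 - w) ^ r ≤ r - 1 := by
      have : (r - 1) * w * (1 - w) ^ r ≤ (r - 1) * 1 * 1 := by
        apply mul_le_mul _ b1 (Real.rpow_nonneg h2 r) (by linarith)
        nlinarith
      linarith
    have hb3 : r * w ^ (2:ℕ) * (1 - w) ^ (r - 1) ≤ r := by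
      have hw2 : w ^ (2:ℕ) ≤ 1 := by nlinarith
      have : r * w ^ (2:ℕ) * (1 - w) ^ (r - 1) ≤ r * 1 * 1 := by
        apply mul_le_mul _ b3 (Real.rpow_nonneg h2 (r - 1)) (by linarith)
        nlinarith
      linarith
    linarith
  have hΨabs : ∀ z ∈ Ioc (0:ℝ) 1, |Ψ (1 - z)| ≤ 2 * r := by
    intro z hz
    have hw : 1 - z ∈ Icc (0:ℝ) 1 := ⟨by linarith [hz.2], by linarith [hz.1]⟩
    rw [abs_of_nonneg (hΨ0 _ hw)]
    exact hΨub _ hw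
  -- main derivative statement
  have main : ∀ x : ℝ, 0 < x →
      HasDerivAt χ
        (x ^ (r - 1) * ∫ z in (0:ℝ)..1,
          Ψ (1 - z) * (r + (r + α - 1) * z * x) * (1 + z * x) ^ (α - 2)) x := by
    intro x0 hx0
    set F : ℝ → ℝ → ℝ := fun x z => Ψ (1 - z) * (1 + z * x) ^ (α - 1) with hF
    set F' : ℝ → ℝ → ℝ := fun x z => Ψ (1 - z) * ((α - 1) * (1 + z * x) ^ (α - 1 - 1) * z)
      with hF'
    have hball : ∀ x ∈ Metric.ball x0 (x0 / 2), 0 < x ∧ x ≤ 2 * x0 := by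
      intro x hx
      rw [Metric.mem_ball, Real.dist_eq, abs_lt] at hx
      constructor <;> linarith [hx.1, hx.2]
    have honez : ∀ {z x : ℝ}, z ∈ Ioc (0:ℝ) 1 → 0 < x → x ≤ 2 * x0 →
        1 ≤ 1 + z * x ∧ 1 + z * x ≤ 1 + 2 * x0 := by
      intro z x hz hx hx2
      constructor
      · nlinarith [hz.1]
      · nlinarith [hz.1, hz.2]
    -- bound for F'
    have key := intervalIntegral.hasDerivAt_integral_of_dominated_loc_of_deriv_le
      (F := F) (F' := F') (x₀ := x0) (a := (0:ℝ)) (b := 1) (μ := volume)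
      (bound := fun _ => 2 * r * (|α - 1| * (1 + 2 * x0) ^ |α - 1 - 1| * 1))
      (Metric.ball_mem_nhds x0 (half_pos hx0))
      (Filter.Eventually.of_forall fun x =>
        ((hΨm.mul (by fun_prop : Measurable fun z : ℝ =>
          (1 + z * x) ^ (α - 1))).aestronglyMeasurable))
      ?_ ?_ ?_ ?_ ?_
    · obtain ⟨hF'int, hgderiv⟩ := key
      -- integrability of F x0
      have hFint : IntervalIntegrable (F x0) volume 0 1 := by
        apply aux_intInt_of_bdd
          (C := 2 * r * (1 + 2 * x0) ^ |α - 1|) (hΨm.mul (by fun_prop))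
        intro z hz
        have h1 := honez hz hx0 (by linarith)
        rw [Pi.mul_apply, abs_mul]
        have hrp : |(1 + z * x0) ^ (α - 1)| = (1 + z * x0) ^ (α - 1) :=
          abs_of_nonneg (Real.rpow_nonneg (by linarith [h1.1]) _)
        rw [hrp]
        exact mul_le_mul (hΨabs z hz) (aux_rpow_le h1.1 h1.2)
          (Real.rpow_nonneg (by linarith [h1.1]) _) (by linarith)
      -- product rule
      have hxr : HasDerivAt (fun x : ℝ => x ^ r) (r * x0 ^ (r - 1)) x0 := by
        simpa using Real.hasDerivAt_rpow_const (p := r) (Or.inl hx0.ne')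
      have hprod := hxr.mul hgderiv
      have hχeq : χ = fun x => x ^ r * ∫ z in (0:ℝ)..1, F x z := funext hχ
      rw [hχeq]
      refine hprod.congr_deriv ?_
      -- identify the derivative
      have hcongr : ∫ z in (0:ℝ)..1,
            Ψ (1 - z) * (r + (r + α - 1) * z * x0) * (1 + z * x0) ^ (α - 2)
          = ∫ z in (0:ℝ)..1, (r * F x0 z + x0 * F' x0 z) := by
        apply intervalIntegral.integral_congr
        intro z hz
        rw [uIcc_of_le zero_le_one] at hz
        have h1 : (1:ℝ) ≤ 1 + z * x0 := by nlinarith [hz.1, hz.2]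
        have hne : (1 + z * x0) ≠ 0 := by linarith
        have e1 : (1 + z * x0) ^ (α - 1) = (1 + z * x0) ^ (α - 2) * (1 + z * x0) := by
          rw [show α - 1 = (α - 2) + 1 by ring, Real.rpow_add_one hne]
        have e2 : (1 + z * x0) ^ (α - 1 - 1) = (1 + z * x0) ^ (α - 2) := by
          rw [show α - 1 - 1 = α - 2 by ring]
        simp only [hF, hF', e1, e2]
        ring
      rw [hcongr, intervalIntegral.integral_add (hFint.const_mul r) (hF'int.const_mul x0),
        intervalIntegral.integral_const_mul, intervalIntegral.integral_const_mul]
      have hxx : x0 ^ r = x0 ^ (r - 1) * x0 := by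
        rw [show r = (r - 1) + 1 by ring, Real.rpow_add_one hx0.ne']
        ring_nf
      rw [hxx]
      ring
    · -- integrability of F x0
      apply aux_intInt_of_bdd
        (C := 2 * r * (1 + 2 * x0) ^ |α - 1|) (hΨm.mul (by fun_prop))
      intro z hz
      have h1 := honez hz hx0 (by linarith)
      rw [Pi.mul_apply, abs_mul]
      have hrp : |(1 + z * x0) ^ (α - 1)| = (1 + z * x0) ^ (α - 1) :=
        abs_of_nonneg (Real.rpow_nonneg (by linarith [h1.1]) _)
      rw [hrp]
      exact mul_le_mul (hΨabs z hz) (aux_rpow_le h1.1 h1.2)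
        (Real.rpow_nonneg (by linarith [h1.1]) _) (by linarith)
    · exact (hΨm.mul (by fun_prop : Measurable fun z : ℝ =>
        (α - 1) * (1 + z * x0) ^ (α - 1 - 1) * z)).aestronglyMeasurable
    · -- bound
      apply Filter.Eventually.of_forall
      intro z hz x hx
      rw [uIoc_of_le zero_le_one] at hz
      obtain ⟨hxpos, hxle⟩ := hball x hx
      have h1 := honez hz hxpos hxle
      simp only [hF', Real.norm_eq_abs, abs_mul]
      apply mul_le_mul (hΨabs z hz) _ (by positivity) (by linarith)
      apply mul_le_mul _ _ (abs_nonneg z) (by positivity)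
      · apply mul_le_mul le_rfl _ (abs_nonneg _) (abs_nonneg _)
        rw [abs_of_nonneg (Real.rpow_nonneg (by linarith [h1.1]) _)]
        exact aux_rpow_le h1.1 h1.2
      · rw [abs_of_nonneg (le_of_lt hz.1)]
        exact hz.2
    · exact intervalIntegrable_const
    · -- differentiability
      apply Filter.Eventually.of_forall
      intro z hz x hx
      rw [uIoc_of_le zero_le_one] at hz
      obtain ⟨hxpos, hxle⟩ := hball x hx
      have h1 := honez hz hxpos hxle
      have hinner : HasDerivAt (fun x : ℝ => 1 + z * x) z x := by
        simpa using ((hasDerivAt_id x).const_mul z).const_add 1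
      have houter := (Real.hasDerivAt_rpow_const (x := 1 + z * x) (p := α - 1)
        (Or.inl (by linarith [h1.1]))).comp x hinner
      exact houter.const_mul (Ψ (1 - z))
  -- positivity of the derivative
  have pos : ∀ x : ℝ, 0 < x →
      0 < x ^ (r - 1) * ∫ z in (0:ℝ)..1,
        Ψ (1 - z) * (r + (r + α - 1) * z * x) * (1 + z * x) ^ (α - 2) := by
    intro x hx
    apply mul_pos (Real.rpow_pos_of_pos hx _)
    apply intervalIntegral.intervalIntegral_pos_of_pos_on
    · apply aux_intInt_of_bdd (C := 2 * r * (r + (r + α - 1) * x) * (1 + 2 * x) ^ |α - 2|)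
      · exact (hΨm.mul (by fun_prop)).mul (by fun_prop)
      · intro z hz
        have h1 : (1:ℝ) ≤ 1 + z * x := by nlinarith [hz.1, hz.2]
        have h2 : 1 + z * x ≤ 1 + 2 * x := by nlinarith [hz.1, hz.2]
        have hf2 : (0:ℝ) ≤ r + (r + α - 1) * z * x := by nlinarith [hz.1, hz.2]
        have hf2' : r + (r + α - 1) * z * x ≤ r + (r + α - 1) * x := by
          have hkey : 0 ≤ (r + α - 1) * x * (1 - z) :=
            mul_nonneg (mul_nonneg (by linarith) hx.le) (by linarith [hz.2])
          nlinarith [hkey]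
        have houter : (0:ℝ) ≤ 2 * r * (r + (r + α - 1) * x) := by
          have : (0:ℝ) ≤ (r + α - 1) * x := mul_nonneg (by linarith) hx.le
          nlinarith
        rw [abs_mul, abs_mul]
        apply mul_le_mul _ _ (abs_nonneg _) houter
        · apply mul_le_mul (hΨabs z hz) _ (abs_nonneg _) (by linarith)
          rw [abs_of_nonneg hf2]; exact hf2'
        · rw [abs_of_nonneg (Real.rpow_nonneg (by linarith) _)]
          exact aux_rpow_le h1 h2
    · intro z hz
      have hw : 1 - z ∈ Icc (0:ℝ) 1 := ⟨by linarith [hz.2], by linarith [hz.1]⟩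
      have hΨpos : 0 < Ψ (1 - z) := by
        rw [hΨ]
        have t1 : 0 < (1 - z) ^ (r + 1) := Real.rpow_pos_of_pos (by linarith [hz.2]) _
        have t2 : 0 ≤ (r - 1) * (1 - z) * (1 - (1 - z)) ^ r := by
          have h3 : (0:ℝ) ≤ (1 - (1 - z)) ^ r := Real.rpow_nonneg (by linarith [hz.1]) r
          have h4 : (0:ℝ) ≤ 1 - z := by linarith [hz.2]
          have h5 : (0:ℝ) ≤ r - 1 := by linarith
          positivity
        have t3 : 0 ≤ r * (1 - z) ^ (2:ℕ) * (1 - (1 - z)) ^ (r - 1) := by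
          have h3 : (0:ℝ) ≤ (1 - (1 - z)) ^ (r - 1) := Real.rpow_nonneg (by linarith [hz.1]) _
          have h4 : (0:ℝ) ≤ (1 - z) ^ (2:ℕ) := sq_nonneg _
          positivity
        linarith
      have hfac : 0 < r + (r + α - 1) * z * x := by
        nlinarith [mul_pos (mul_pos (show (0:ℝ) < r + α - 1 by linarith) hz.1) hx]
      have hrp : 0 < (1 + z * x) ^ (α - 2) :=
        Real.rpow_pos_of_pos (by nlinarith [hz.1]) _
      positivity
    · exact zero_lt_one
  refine ⟨fun x hx => ⟨main x hx, pos x hx⟩, ?_, ?_⟩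
  · have hmono : StrictMonoOn χ (Ioi 0) := by
      apply strictMonoOn_of_deriv_pos (convex_Ioi 0)
      · intro x hx
        exact (main x hx).continuousAt.continuousWithinAt
      · intro x hx
        rw [interior_Ioi] at hx
        rw [(main x hx).deriv]
        exact pos x hx
    exact hmono
  · have hmono : StrictMonoOn χ (Ioi 0) := by
      apply strictMonoOn_of_deriv_pos (convex_Ioi 0)
      · intro x hx
        exact (main x hx).continuousAt.continuousWithinAt
      · intro x hx
        rw [interior_Ioi] at hx
        rw [(main x hx).deriv]
        exact pos x hx
    exact hmono.injOn
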